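/- (Christoffel–Darboux formula, Hankel case.) If G is block Hankel and α ∈ ℂ with Im α > 0, then with ρ_β(λ) := −2πi(λ − \bar{β}) one has, for all λ, ω ∈ ℂ: −2πi(λ − \bar{ω})·F(λ)ΓF(ω)* = ρ_α(λ)·\overline{ρ_α(ω)}·F(λ)ΓF(α)*·(ρ_α(α)·F(α)ΓF(α)*)^{-1}·F(α)ΓF(ω)* − ρ_{\bar{α}}(λ)·\overline{ρ_{\bar{α}}(ω)}·F(λ)ΓF(\bar{α})*·(ρ_α(α)·F(\bar{α})ΓF(\bar{α})*)^{-1}·F(\bar{α})ΓF(ω)*. (Here ρ_α(α) = 4π·Im α > 0, and F(α)ΓF(α)*, F(\bar{α})ΓF(\bar{α})* are positive definite, so the inverses exist.) -/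

import Mathlib

open Matrix Complex
open scoped ComplexConjugate ComplexOrder

noncomputable section

/-- Index type for `ℂ^m` with `m = (n+1)p`, viewed as `n+1` blocks of size `p`. -/
abbrev Idx (n p : ℕ) : Type := Fin (n + 1) × Fin p

/-- The `p × m` matrix polynomial `F(λ) = [I_p, λI_p, …, λ^n I_p]`. -/
def Fm (n p : ℕ) (lam : ℂ) : Matrix (Fin p) (Idx n p) ℂ :=
  Matrix.of fun i jk => lam ^ (jk.1 : ℕ) * (if jk.2 = i then 1 else 0)

/-- The `m × p` matrix `e_k` whose `k`-th block is `I_p` and other blocks are `0`. -/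
def Ek (n p : ℕ) (k : Fin (n + 1)) : Matrix (Idx n p) (Fin p) ℂ :=
  Matrix.of fun jl i => if jl.1 = k ∧ jl.2 = i then 1 else 0

/-- The nilpotent block shift matrix `A` with blocks `A_{ij} = I_p` iff `j = i+1`. -/
def Am (n p : ℕ) : Matrix (Idx n p) (Idx n p) ℂ :=
  Matrix.of fun ia jb => if (jb.1 : ℕ) = (ia.1 : ℕ) + 1 ∧ ia.2 = jb.2 then 1 else 0

/-- `G` is block Hankel: `g_{i+1,j} = g_{i,j+1}` for `0 ≤ i,j ≤ n−1`. -/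
def BlockHankel (n p : ℕ) (G : Matrix (Idx n p) (Idx n p) ℂ) : Prop :=
  ∀ (i j : Fin n) (a b : Fin p),
    G (i.succ, a) (j.castSucc, b) = G (i.castSucc, a) (j.succ, b)

/-- `ρ_β(λ) = −2πi(λ − conj β)`. -/
def rho (beta lam : ℂ) : ℂ := -2 * (Real.pi : ℂ) * Complex.I * (lam - conj beta)

namespace CDAux

variable {n p : ℕ}

lemma FmE0 (n p : ℕ) (l : ℂ) : Fm n p l * Ek n p 0 = 1 := by
  ext a b
  simp only [mul_apply, Fm, Ek, Matrix.of_apply, Fintype.sum_prod_type, one_apply]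
  rw [Finset.sum_eq_single (0 : Fin (n+1))]
  · simp [Finset.sum_ite_eq, eq_comm]
  · intro j _ hj; simp [hj]
  · simp

lemma FmAm (n p : ℕ) (l : ℂ) :
    Fm n p l * Am n p =
      Matrix.of fun a jk =>
        (if (jk.1 : ℕ) = 0 then 0 else l ^ ((jk.1 : ℕ) - 1)) *
          (if jk.2 = a then 1 else 0) := by
  ext a ⟨j, b⟩
  simp only [mul_apply, Fm, Am, Matrix.of_apply, Fintype.sum_prod_type]
  induction j using Fin.cases with
  | zero =>
      have h0 : ∀ k : Fin (n+1), ¬ ((0 : Fin (n+1)) : ℕ) = (k : ℕ) + 1 := by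
        intro k; simp
      simp [h0]
  | succ i =>
      rw [Finset.sum_eq_single i.castSucc]
      · have h1 : ((i.succ : Fin (n+1)) : ℕ) = ((i.castSucc : Fin (n+1)) : ℕ) + 1 := by simp
        have h2 : ¬ ((i.succ : Fin (n+1)) : ℕ) = 0 := by simp
        have h3 : ((i.succ : Fin (n+1)) : ℕ) - 1 = ((i.castSucc : Fin (n+1)) : ℕ) := by simp
        rw [Finset.sum_eq_single b]
        · simp [h1, h2, h3, mul_comm]
        · intro c _ hc; simp [hc]
        · simp
      · intro k _ hk
        have h4 : ¬ ((i.succ : Fin (n+1)) : ℕ) = (k : ℕ) + 1 := by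
          intro h
          exact hk (Fin.ext (by simp at h ⊢; omega))
        simp only [h4, false_and, if_false, mul_zero, Finset.sum_const_zero]
      · simp

lemma Fshift (n p : ℕ) (l : ℂ) :
    Fm n p l - l • (Fm n p l * Am n p) = (Ek n p 0)ᴴ := by
  rw [FmAm]
  ext a ⟨j, b⟩
  simp only [Matrix.sub_apply, Matrix.smul_apply, Fm, Ek, Matrix.of_apply, conjTranspose_apply,
    smul_eq_mul]
  induction j using Fin.cases with
  | zero => simp [apply_ite conj, and_comm]
  | succ i =>
      have h2 : ¬ ((i.succ : Fin (n+1)) : ℕ) = 0 := by simp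
      have h5 : ¬ (i.succ : Fin (n+1)) = 0 := by simp [Fin.ext_iff]
      have h3 : ((i.succ : Fin (n+1)) : ℕ) - 1 + 1 = ((i.succ : Fin (n+1)) : ℕ) := by simp
      by_cases hab : b = a
      · subst hab
        simp only [h2, if_false, if_true, mul_one, h5, false_and, if_false, map_zero]
        rw [← pow_succ', h3]; simp
      · simp [hab, h2, h5, apply_ite conj]

lemma GAm_succ (G : Matrix (Idx n p) (Idx n p) ℂ) (i : Fin (n+1)) (a b : Fin p) (j' : Fin n) :
    (G * Am n p) (i, a) (j'.succ, b) = G (i, a) (j'.castSucc, b) := by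
  simp only [mul_apply, Am, Matrix.of_apply, Fintype.sum_prod_type]
  rw [Finset.sum_eq_single j'.castSucc]
  · rw [Finset.sum_eq_single b]
    · simp
    · intro c _ hc; simp [hc]
    · simp
  · intro k _ hk
    have h4 : ¬ ((j' : ℕ) = (k : ℕ)) := by
      intro h; exact hk (Fin.ext (by simp; omega))
    simp [h4]
  · simp

lemma GAm_zero (G : Matrix (Idx n p) (Idx n p) ℂ) (i : Fin (n+1)) (a b : Fin p) :
    (G * Am n p) (i, a) (0, b) = 0 := by
  simp only [mul_apply, Am, Matrix.of_apply, Fintype.sum_prod_type]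
  have h0 : ∀ k : Fin (n+1), ¬ ((0 : Fin (n+1)) : ℕ) = (k : ℕ) + 1 := by intro k; simp
  simp [h0]

lemma AmHG_succ (G : Matrix (Idx n p) (Idx n p) ℂ) (j : Idx n p) (a : Fin p) (i' : Fin n) :
    ((Am n p)ᴴ * G) (i'.succ, a) j = G (i'.castSucc, a) j := by
  simp only [mul_apply, Am, Matrix.of_apply, conjTranspose_apply, Fintype.sum_prod_type]
  rw [Finset.sum_eq_single i'.castSucc]
  · rw [Finset.sum_eq_single a]
    · simp
    · intro c _ hc; simp [hc, apply_ite conj]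
    · simp
  · intro k _ hk
    have h4 : ¬ ((i' : ℕ) = (k : ℕ)) := by
      intro h; exact hk (Fin.ext (by simp; omega))
    simp [h4, apply_ite conj]
  · simp

lemma AmHG_zero (G : Matrix (Idx n p) (Idx n p) ℂ) (j : Idx n p) (a : Fin p) :
    ((Am n p)ᴴ * G) (0, a) j = 0 := by
  simp only [mul_apply, Am, Matrix.of_apply, conjTranspose_apply, Fintype.sum_prod_type]
  have h0 : ∀ k : Fin (n+1), ¬ ((0 : Fin (n+1)) : ℕ) = (k : ℕ) + 1 := by intro k; simp
  simp [h0, apply_ite conj]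

lemma E0_mul_conjT (u : Matrix (Idx n p) (Fin p) ℂ) (i j : Fin (n+1)) (a b : Fin p) :
    (Ek n p 0 * uᴴ) (i, a) (j, b) = if i = 0 then conj (u (j, b) a) else 0 := by
  simp only [mul_apply, Ek, Matrix.of_apply, conjTranspose_apply]
  rw [Finset.sum_eq_single a]
  · by_cases h : i = 0 <;> simp [h]
  · intro c _ hc
    have hnc : ¬(i = 0 ∧ a = c) := fun h => hc h.2.symm
    simp [hnc]
  · simp

lemma mul_E0H (u : Matrix (Idx n p) (Fin p) ℂ) (i j : Fin (n+1)) (a b : Fin p) :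
    (u * (Ek n p 0)ᴴ) (i, a) (j, b) = if j = 0 then u (i, a) b else 0 := by
  simp only [mul_apply, Ek, Matrix.of_apply, conjTranspose_apply]
  rw [Finset.sum_eq_single b]
  · by_cases h : j = 0 <;> simp [h, apply_ite conj]
  · intro c _ hc
    have hnc : ¬(j = 0 ∧ b = c) := fun h => hc h.2.symm
    simp [hnc]
  · simp

lemma tE_succ (G : Matrix (Idx n p) (Idx n p) ℂ) (a b : Fin p) (i' : Fin n) :
    ((Am n p)ᴴ * G * Ek n p 0) (i'.succ, a) b = G (i'.castSucc, a) (0, b) := by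
  rw [mul_apply, Fintype.sum_prod_type]
  rw [Finset.sum_eq_single (0 : Fin (n+1))]
  · rw [Finset.sum_eq_single b]
    · rw [AmHG_succ]; simp [Ek]
    · intro c _ hc; simp [Ek, hc]
    · simp
  · intro k _ hk; simp [Ek, hk]
  · simp

lemma tE_zero (G : Matrix (Idx n p) (Idx n p) ℂ) (a b : Fin p) :
    ((Am n p)ᴴ * G * Ek n p 0) (0, a) b = 0 := by
  rw [mul_apply]
  have : ∀ k, ((Am n p)ᴴ * G) (0, a) k = 0 := fun k => AmHG_zero G k a
  simp [this]

lemma hankelDisp (G : Matrix (Idx n p) (Idx n p) ℂ) (hHerm : Gᴴ = G)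
    (hH : BlockHankel n p G) :
    G * Am n p - (Am n p)ᴴ * G =
      Ek n p 0 * ((Am n p)ᴴ * G * Ek n p 0)ᴴ -
        ((Am n p)ᴴ * G * Ek n p 0) * (Ek n p 0)ᴴ := by
  have herm : ∀ x y, conj (G x y) = G y x := by
    intro x y
    have := congrFun (congrFun hHerm y) x
    simpa [conjTranspose_apply] using this
  ext ⟨i, a⟩ ⟨j, b⟩
  rw [Matrix.sub_apply, Matrix.sub_apply, E0_mul_conjT, mul_E0H]
  induction i using Fin.cases with
  | zero =>
      have hAz := AmHG_zero G (j, b) a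
      induction j using Fin.cases with
      | zero => simp [GAm_zero, hAz, tE_zero]
      | succ j' =>
          have h5 : ¬ (j'.succ : Fin (n+1)) = 0 := by simp [Fin.ext_iff]
          rw [GAm_succ, hAz, tE_succ]
          simp [h5, herm]
  | succ i' =>
      have h5 : ¬ (i'.succ : Fin (n+1)) = 0 := by simp [Fin.ext_iff]
      induction j using Fin.cases with
      | zero => rw [GAm_zero, AmHG_succ, tE_succ]; simp [h5]
      | succ j' =>
          have h6 : ¬ (j'.succ : Fin (n+1)) = 0 := by simp [Fin.ext_iff]
          rw [GAm_succ, AmHG_succ]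
          simp [h5, h6, hH i' j' a b]


variable {q : ℕ} {m' : Type*} [Fintype m'] [DecidableEq m']

lemma starId (G Γ Amm : Matrix m' m' ℂ) (E t : Matrix m' (Fin q) ℂ)
    (Fl Fw : Matrix (Fin q) m' ℂ) (l w : ℂ)
    (hΓG : Γ * G = 1) (hGΓ : G * Γ = 1) (hΓh : Γᴴ = Γ)
    (h1 : G * Amm - Ammᴴ * G = E * tᴴ - t * Eᴴ)
    (h2l : Fl - l • (Fl * Amm) = Eᴴ)
    (h2w : Fw - w • (Fw * Amm) = Eᴴ) :
    (l • (Fl * Γ * E)) * (1 - w • (Fw * Γ * t))ᴴ -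
      (1 - l • (Fl * Γ * t)) * (w • (Fw * Γ * E))ᴴ
      = (l - conj w) • (Fl * Γ * Fwᴴ) := by
  have hB : l • (Fl * Amm) = Fl - Eᴴ := by rw [← h2l]; abel
  have hA : conj w • (Ammᴴ * Fwᴴ) = Fwᴴ - E := by
    have h := congrArg conjTranspose h2w
    simp only [conjTranspose_sub, conjTranspose_smul, conjTranspose_mul,
      conjTranspose_conjTranspose, Complex.star_def] at h
    rw [← h]; abel
  have c1 : (1 - w • (Fw * Γ * t))ᴴ = 1 - conj w • (tᴴ * (Γ * Fwᴴ)) := by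
    simp [conjTranspose_sub, conjTranspose_smul, conjTranspose_mul, hΓh, Matrix.mul_assoc]
  have c2 : (w • (Fw * Γ * E))ᴴ = conj w • (Eᴴ * (Γ * Fwᴴ)) := by
    simp [conjTranspose_smul, conjTranspose_mul, hΓh, Matrix.mul_assoc]
  rw [c1, c2]
  have expand :
      (l • (Fl * Γ * E)) * (1 - conj w • (tᴴ * (Γ * Fwᴴ))) -
        (1 - l • (Fl * Γ * t)) * (conj w • (Eᴴ * (Γ * Fwᴴ)))
      = l • (Fl * Γ * E)
        - (l * conj w) • ((Fl * Γ * E) * (tᴴ * (Γ * Fwᴴ)))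
        - conj w • (Eᴴ * (Γ * Fwᴴ))
        + (l * conj w) • ((Fl * Γ * t) * (Eᴴ * (Γ * Fwᴴ))) := by
    simp only [mul_sub, sub_mul, mul_one, one_mul, Matrix.smul_mul, Matrix.mul_smul,
      smul_smul]
    module
  rw [expand]
  have key : (Fl * Γ * E) * (tᴴ * (Γ * Fwᴴ)) - (Fl * Γ * t) * (Eᴴ * (Γ * Fwᴴ))
      = (Fl * Amm) * (Γ * Fwᴴ) - (Fl * Γ) * (Ammᴴ * Fwᴴ) := by
    have r1 : (Fl * Γ * E) * (tᴴ * (Γ * Fwᴴ)) = (Fl * Γ) * ((E * tᴴ) * (Γ * Fwᴴ)) := by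
      rw [Matrix.mul_assoc (Fl * Γ) E, ← Matrix.mul_assoc E]
    have r2 : (Fl * Γ * t) * (Eᴴ * (Γ * Fwᴴ)) = (Fl * Γ) * ((t * Eᴴ) * (Γ * Fwᴴ)) := by
      rw [Matrix.mul_assoc (Fl * Γ) t, ← Matrix.mul_assoc t]
    rw [r1, r2, ← Matrix.mul_sub, ← Matrix.sub_mul, ← h1]
    rw [Matrix.sub_mul, Matrix.mul_sub]
    congr 1
    · -- (Fl*Γ) * ((G*Amm) * (Γ*Fwᴴ)) = (Fl*Amm)*(Γ*Fwᴴ)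
      rw [Matrix.mul_assoc G Amm, ← Matrix.mul_assoc (Fl * Γ) G,
        Matrix.mul_assoc Fl Γ G, hΓG, Matrix.mul_one, Matrix.mul_assoc]
    · -- (Fl*Γ) * ((Ammᴴ*G) * (Γ*Fwᴴ)) = (Fl*Γ)*(Ammᴴ*Fwᴴ)
      rw [Matrix.mul_assoc Ammᴴ G, ← Matrix.mul_assoc G Γ, hGΓ, Matrix.one_mul]
  have split : (l * conj w) • ((Fl * Γ * E) * (tᴴ * (Γ * Fwᴴ)))
        - (l * conj w) • ((Fl * Γ * t) * (Eᴴ * (Γ * Fwᴴ)))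
      = (l * conj w) • ((Fl * Amm) * (Γ * Fwᴴ))
        - (l * conj w) • ((Fl * Γ) * (Ammᴴ * Fwᴴ)) := by
    rw [← smul_sub, ← smul_sub, key]
  have s1 : (l * conj w) • ((Fl * Amm) * (Γ * Fwᴴ))
      = conj w • (Fl * (Γ * Fwᴴ)) - conj w • (Eᴴ * (Γ * Fwᴴ)) := by
    have h : conj w • ((l • (Fl * Amm)) * (Γ * Fwᴴ))
        = (l * conj w) • ((Fl * Amm) * (Γ * Fwᴴ)) := by
      rw [Matrix.smul_mul, smul_smul, mul_comm]
    rw [← h, hB, Matrix.sub_mul, smul_sub]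
  have s2 : (l * conj w) • ((Fl * Γ) * (Ammᴴ * Fwᴴ))
      = l • ((Fl * Γ) * Fwᴴ) - l • ((Fl * Γ) * E) := by
    have h : l • ((Fl * Γ) * (conj w • (Ammᴴ * Fwᴴ)))
        = (l * conj w) • ((Fl * Γ) * (Ammᴴ * Fwᴴ)) := by
      rw [Matrix.mul_smul, smul_smul, mul_comm]
    rw [← h, hA, Matrix.mul_sub, smul_sub]
  have comb : l • (Fl * Γ * E)
        - ((l * conj w) • ((Fl * Γ * E) * (tᴴ * (Γ * Fwᴴ))))
        - conj w • (Eᴴ * (Γ * Fwᴴ))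
        + (l * conj w) • ((Fl * Γ * t) * (Eᴴ * (Γ * Fwᴴ)))
      = l • (Fl * Γ * E)
        - ((l * conj w) • ((Fl * Amm) * (Γ * Fwᴴ))
            - (l * conj w) • ((Fl * Γ) * (Ammᴴ * Fwᴴ)))
        - conj w • (Eᴴ * (Γ * Fwᴴ)) := by
    rw [← split]; abel
  rw [comb, s1, s2]
  have assoc1 : Fl * (Γ * Fwᴴ) = Fl * Γ * Fwᴴ := by rw [Matrix.mul_assoc]
  rw [assoc1, sub_smul]
  module
def Jm (q : ℕ) : Matrix (Fin q ⊕ Fin q) (Fin q ⊕ Fin q) ℂ :=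
  fromBlocks 0 1 (-1) 0

lemma Jm_mul_neg_Jm (q : ℕ) : Jm q * (-Jm q) = 1 := by
  simp only [Jm, fromBlocks_neg, fromBlocks_multiply]
  simp [← fromBlocks_one]

lemma Jm_conjTranspose (q : ℕ) : (Jm q)ᴴ = -Jm q := by
  simp only [Jm, fromBlocks_conjTranspose, fromBlocks_neg]
  congr 1 <;> simp

lemma Jm_isUnit (q : ℕ) : IsUnit (Jm q).det :=
  Matrix.isUnit_det_of_right_inverse (Jm_mul_neg_Jm q)

lemma Jm_inv (q : ℕ) : (Jm q)⁻¹ = -Jm q :=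
  Matrix.inv_eq_right_inv (Jm_mul_neg_Jm q)

lemma Jkey (q : ℕ) (Va Vb : Matrix (Fin q) (Fin q ⊕ Fin q) ℂ)
    (h0 : Va * Jm q * Vbᴴ = 0)
    (hda : IsUnit (Va * Jm q * Vaᴴ).det) (hdb : IsUnit (Vb * Jm q * Vbᴴ).det) :
    Jm q = Jm q * (Vaᴴ * (Va * Jm q * Vaᴴ)⁻¹ * Va + Vbᴴ * (Vb * Jm q * Vbᴴ)⁻¹ * Vb) * Jm q := by
  set J := Jm q with hJ
  set Δa := Va * J * Vaᴴ with hΔa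
  set Δb := Vb * J * Vbᴴ with hΔb
  have h0' : Vb * J * Vaᴴ = 0 := by
    have h := congrArg conjTranspose h0
    simp only [conjTranspose_mul, conjTranspose_zero, conjTranspose_conjTranspose,
      Jm_conjTranspose, hJ] at h
    -- h : Vb * (-(Jm q)) * Vaᴴ = 0  (association!)
    have h2 : -(Vb * Jm q * Vaᴴ) = 0 := by
      rw [← h]; simp [Matrix.mul_neg, Matrix.neg_mul, Matrix.mul_assoc]
    exact neg_eq_zero.mp h2
  set W := fromRows Va Vb with hW
  have hWH : Wᴴ = fromCols Vaᴴ Vbᴴ := conjTranspose_fromRows_eq_fromCols_conjTranspose Va Vb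
  have hWJW : W * J * Wᴴ = fromBlocks Δa 0 0 Δb := by
    rw [hW, hWH, fromRows_mul, fromRows_mul_fromCols, h0, h0']
  have hDinv : (fromBlocks Δa 0 0 Δb) * (fromBlocks Δa⁻¹ 0 0 Δb⁻¹) = 1 := by
    rw [fromBlocks_multiply]
    rw [Matrix.mul_nonsing_inv _ hda, Matrix.mul_nonsing_inv _ hdb]
    simp [← fromBlocks_one]
  have hDdet : IsUnit (fromBlocks Δa 0 0 Δb).det :=
    Matrix.isUnit_det_of_right_inverse hDinv
  have hWdet : IsUnit W.det := by
    have h1 : IsUnit (W * J * Wᴴ).det := hWJW ▸ hDdet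
    simp only [Matrix.det_mul] at h1
    exact isUnit_of_mul_isUnit_left (isUnit_of_mul_isUnit_left h1)
  have hWHdet : IsUnit (Wᴴ).det := by
    rw [Matrix.det_conjTranspose]
    exact hWdet.star
  have hDinv' : (W * J * Wᴴ)⁻¹ = fromBlocks Δa⁻¹ 0 0 Δb⁻¹ := by
    rw [hWJW]; exact Matrix.inv_eq_right_inv hDinv
  have main : J * Wᴴ * (W * J * Wᴴ)⁻¹ * W * J = J := by
    rw [Matrix.mul_inv_rev, Matrix.mul_inv_rev]
    calc J * Wᴴ * ((Wᴴ)⁻¹ * ((J)⁻¹ * W⁻¹)) * W * J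
        = J * (Wᴴ * (Wᴴ)⁻¹) * (J⁻¹ * ((W⁻¹ * W) * J)) := by
          simp only [Matrix.mul_assoc]
      _ = J := by
          rw [Matrix.mul_nonsing_inv _ hWHdet, Matrix.nonsing_inv_mul _ hWdet]
          simp only [Matrix.mul_one, Matrix.one_mul]
          rw [Matrix.nonsing_inv_mul _ (Jm_isUnit q), Matrix.mul_one]
  have expand : Wᴴ * (W * J * Wᴴ)⁻¹ * W = Vaᴴ * Δa⁻¹ * Va + Vbᴴ * Δb⁻¹ * Vb := by
    rw [hDinv', hWH, hW, fromCols_mul_fromBlocks, fromCols_mul_fromRows]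
    simp [Matrix.mul_assoc]
  calc J = J * Wᴴ * (W * J * Wᴴ)⁻¹ * W * J := main.symm
    _ = J * (Wᴴ * (W * J * Wᴴ)⁻¹ * W) * J := by
        simp only [Matrix.mul_assoc]
    _ = J * (Vaᴴ * Δa⁻¹ * Va + Vbᴴ * Δb⁻¹ * Vb) * J := by rw [expand]
lemma smulInvAux {q : ℕ} (c : ℂ) (hc : c ≠ 0) (M : Matrix (Fin q) (Fin q) ℂ)
    (hM : IsUnit M.det) : (c • M)⁻¹ = c⁻¹ • M⁻¹ := by
  apply Matrix.inv_eq_right_inv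
  rw [Matrix.smul_mul, Matrix.mul_smul, Matrix.mul_nonsing_inv _ hM, smul_smul,
    mul_inv_cancel₀ hc, one_smul]

-- abstract posdef sandwich
lemma posdef_sandwich {q : ℕ} {m' : Type*} [Fintype m'] [DecidableEq m']
    (Γ : Matrix m' m' ℂ) (hΓ : Γ.PosDef) (F : Matrix (Fin q) m' ℂ)
    (E : Matrix m' (Fin q) ℂ) (hFE : F * E = 1) :
    (F * Γ * Fᴴ).PosDef := by
  rw [Matrix.posDef_iff_dotProduct_mulVec]
  constructor
  · exact Matrix.isHermitian_mul_mul_conjTranspose F hΓ.1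
  · intro x hx
    have hu : Fᴴ *ᵥ x ≠ 0 := by
      intro h
      apply hx
      have h1 : Eᴴ *ᵥ (Fᴴ *ᵥ x) = x := by
        rw [Matrix.mulVec_mulVec, ← Matrix.conjTranspose_mul, hFE]
        simp
      rw [h] at h1
      simp at h1
      exact h1.symm
    have key : star x ⬝ᵥ ((F * Γ * Fᴴ) *ᵥ x) = star (Fᴴ *ᵥ x) ⬝ᵥ (Γ *ᵥ (Fᴴ *ᵥ x)) := by
      rw [← Matrix.mulVec_mulVec, ← Matrix.mulVec_mulVec]
      rw [Matrix.star_mulVec, Matrix.conjTranspose_conjTranspose]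
      rw [Matrix.dotProduct_mulVec (star x) F]
    rw [key]
    exact hΓ.dotProduct_mulVec_pos hu
lemma CDcore (q : ℕ) (K : ℂ → ℂ → Matrix (Fin q) (Fin q) ℂ)
    (V : ℂ → Matrix (Fin q) (Fin q ⊕ Fin q) ℂ)
    (hstar : ∀ l w, V l * Jm q * (V w)ᴴ = (l - conj w) • K l w)
    (α : ℂ) (hne : α - conj α ≠ 0)
    (hKaa : IsUnit (K α α).det) (hKbb : IsUnit (K (conj α) (conj α)).det)
    (lam om : ℂ) :
    (lam - conj om) • K lam om =
      ((lam - conj α) * (α - conj α)⁻¹ * (α - conj om)) •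
        (K lam α * (K α α)⁻¹ * K α om) +
      ((lam - α) * (conj α - α)⁻¹ * (conj α - conj om)) •
        (K lam (conj α) * (K (conj α) (conj α))⁻¹ * K (conj α) om) := by
  have hne' : conj α - α ≠ 0 := fun h => hne (by
    have := neg_eq_zero.mpr h; rw [neg_sub] at this; exact this)
  have h0 : V α * Jm q * (V (conj α))ᴴ = 0 := by
    rw [hstar, conj_conj, sub_self, zero_smul]
  have hda : IsUnit (V α * Jm q * (V α)ᴴ).det := by
    rw [hstar, Matrix.det_smul]
    exact (mul_ne_zero (pow_ne_zero _ hne) hKaa.ne_zero).isUnit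
  have hdb : IsUnit (V (conj α) * Jm q * (V (conj α))ᴴ).det := by
    rw [hstar, conj_conj, Matrix.det_smul]
    exact (mul_ne_zero (pow_ne_zero _ hne') hKbb.ne_zero).isUnit
  have jk := Jkey q (V α) (V (conj α)) h0 hda hdb
  calc (lam - conj om) • K lam om
      = V lam * Jm q * (V om)ᴴ := (hstar _ _).symm
    _ = V lam * (Jm q * ((V α)ᴴ * (V α * Jm q * (V α)ᴴ)⁻¹ * V α
          + (V (conj α))ᴴ * (V (conj α) * Jm q * (V (conj α))ᴴ)⁻¹ * V (conj α)) * Jm q)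
          * (V om)ᴴ := by
        conv_lhs => rw [jk]
    _ = (V lam * Jm q * (V α)ᴴ) * (V α * Jm q * (V α)ᴴ)⁻¹ * (V α * Jm q * (V om)ᴴ)
        + (V lam * Jm q * (V (conj α))ᴴ) * (V (conj α) * Jm q * (V (conj α))ᴴ)⁻¹
          * (V (conj α) * Jm q * (V om)ᴴ) := by
        simp only [Matrix.mul_add, Matrix.add_mul, Matrix.mul_assoc]
    _ = ((lam - conj α) • K lam α) * (((α - conj α) • K α α)⁻¹)
          * ((α - conj om) • K α om)
        + ((lam - conj (conj α)) • K lam (conj α))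
          * (((conj α - conj (conj α)) • K (conj α) (conj α))⁻¹)
          * ((conj α - conj om) • K (conj α) om) := by
        rw [hstar, hstar, hstar, hstar, hstar, hstar]
    _ = ((lam - conj α) * (α - conj α)⁻¹ * (α - conj om)) •
          (K lam α * (K α α)⁻¹ * K α om)
        + ((lam - α) * (conj α - α)⁻¹ * (conj α - conj om)) •
          (K lam (conj α) * (K (conj α) (conj α))⁻¹ * K (conj α) om) := by
        rw [conj_conj, smulInvAux _ hne _ hKaa, smulInvAux _ hne' _ hKbb]
        simp only [Matrix.smul_mul, Matrix.mul_smul, smul_smul]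
        match_scalars <;> ring
lemma finalAssembly (q : ℕ) (α lam om : ℂ) (hne : α - conj α ≠ 0)
    (Klw Kla Kaa Kaw Klb Kbb Kbw : Matrix (Fin q) (Fin q) ℂ)
    (hKaa : IsUnit Kaa.det) (hKbb : IsUnit Kbb.det)
    (h : (lam - conj om) • Klw =
      ((lam - conj α) * (α - conj α)⁻¹ * (α - conj om)) • (Kla * Kaa⁻¹ * Kaw) +
      ((lam - α) * (conj α - α)⁻¹ * (conj α - conj om)) • (Klb * Kbb⁻¹ * Kbw)) :
    (-2 * (Real.pi : ℂ) * Complex.I * (lam - conj om)) • Klw =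
      (rho α lam * conj (rho α om)) • (Kla * (rho α α • Kaa)⁻¹ * Kaw) -
      (rho (conj α) lam * conj (rho (conj α) om)) • (Klb * (rho α α • Kbb)⁻¹ * Kbw) := by
  have hc2 : (-2 : ℂ) * (Real.pi : ℂ) * Complex.I ≠ 0 := by
    simp [Real.pi_ne_zero, Complex.I_ne_zero, Complex.ofReal_ne_zero]
  have hrho : rho α α ≠ 0 := mul_ne_zero hc2 hne
  rw [smulInvAux _ hrho _ hKaa, smulInvAux _ hrho _ hKbb]
  rw [show (-2 * (Real.pi : ℂ) * Complex.I * (lam - conj om)) • Klw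
      = (-2 * (Real.pi : ℂ) * Complex.I) • ((lam - conj om) • Klw) from (smul_smul _ _ _).symm, h]
  simp only [smul_add, smul_smul, Matrix.smul_mul, Matrix.mul_smul]
  have hne' : conj α - α ≠ 0 := fun hz => hne (by
    have := neg_eq_zero.mpr hz; rw [neg_sub] at this; exact this)
  have h2 : (starRingEnd ℂ) 2 = 2 := by rw [show (2:ℂ) = ((2:ℝ):ℂ) by norm_num, Complex.conj_ofReal]
  match_scalars <;>
  · simp only [rho, _root_.map_mul, map_sub, map_neg, conj_conj, Complex.conj_I,
      Complex.conj_ofReal, h2]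
    field_simp
    ring

end CDAux

open CDAux in
theorem stmt13 (p n : ℕ) (hp : 0 < p) (hn : 0 < n)
    (G : Matrix (Idx n p) (Idx n p) ℂ) (hG : G.PosDef) (hH : BlockHankel n p G)
    (α : ℂ) (hα : 0 < α.im) :
    ∀ lam om : ℂ,
      (-2 * (Real.pi : ℂ) * Complex.I * (lam - conj om)) • (Fm n p lam * G⁻¹ * (Fm n p om)ᴴ) =
        (rho α lam * conj (rho α om)) •
            (Fm n p lam * G⁻¹ * (Fm n p α)ᴴ * (rho α α • (Fm n p α * G⁻¹ * (Fm n p α)ᴴ))⁻¹ *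
              (Fm n p α * G⁻¹ * (Fm n p om)ᴴ)) -
          (rho (conj α) lam * conj (rho (conj α) om)) •
            (Fm n p lam * G⁻¹ * (Fm n p (conj α))ᴴ *
              (rho α α • (Fm n p (conj α) * G⁻¹ * (Fm n p (conj α))ᴴ))⁻¹ *
              (Fm n p (conj α) * G⁻¹ * (Fm n p om)ᴴ)) := by
  intro lam om
  have hdet : IsUnit G.det := hG.det_pos.ne'.isUnit
  have hΓpos : (G⁻¹).PosDef := hG.inv
  have hΓG : G⁻¹ * G = 1 := Matrix.nonsing_inv_mul G hdet
  have hGΓ : G * G⁻¹ = 1 := Matrix.mul_nonsing_inv G hdet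
  have hΓh : (G⁻¹)ᴴ = G⁻¹ := hΓpos.1
  have h1 := hankelDisp G hG.1 hH
  have hKpos : ∀ β : ℂ, (Fm n p β * G⁻¹ * (Fm n p β)ᴴ).PosDef := fun β =>
    posdef_sandwich _ hΓpos _ _ (FmE0 n p β)
  have hKaa : IsUnit (Fm n p α * G⁻¹ * (Fm n p α)ᴴ).det := (hKpos α).det_pos.ne'.isUnit
  have hKbb : IsUnit (Fm n p (conj α) * G⁻¹ * (Fm n p (conj α))ᴴ).det :=
    (hKpos (conj α)).det_pos.ne'.isUnit
  have hne : α - conj α ≠ 0 := by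
    intro h
    have h2 : α.im = 0 := by
      have h3 := congrArg Complex.im h
      simp [Complex.sub_im, Complex.conj_im] at h3
      linarith
    exact absurd h2 (ne_of_gt hα)
  set V : ℂ → Matrix (Fin p) (Fin p ⊕ Fin p) ℂ := fun l =>
    fromCols (l • (Fm n p l * G⁻¹ * Ek n p 0))
      (1 - l • (Fm n p l * G⁻¹ * ((Am n p)ᴴ * G * Ek n p 0))) with hV
  have hstar : ∀ l w, V l * Jm p * (V w)ᴴ =
      (l - conj w) • (Fm n p l * G⁻¹ * (Fm n p w)ᴴ) := by
    intro l w
    have hsid := starId G G⁻¹ (Am n p) (Ek n p 0) ((Am n p)ᴴ * G * Ek n p 0)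
      (Fm n p l) (Fm n p w) l w hΓG hGΓ hΓh h1 (Fshift n p l) (Fshift n p w)
    have hVJ : V l * Jm p =
        fromCols (-(1 - l • (Fm n p l * G⁻¹ * ((Am n p)ᴴ * G * Ek n p 0))))
          (l • (Fm n p l * G⁻¹ * Ek n p 0)) := by
      rw [hV]
      show fromCols _ _ * fromBlocks 0 1 (-1) 0 = _
      rw [fromCols_mul_fromBlocks]
      simp
    have hVwH : (V w)ᴴ =
        fromRows (w • (Fm n p w * G⁻¹ * Ek n p 0))ᴴ
          (1 - w • (Fm n p w * G⁻¹ * ((Am n p)ᴴ * G * Ek n p 0)))ᴴ := by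
      rw [hV]
      exact conjTranspose_fromCols_eq_fromRows_conjTranspose _ _
    rw [hVJ, hVwH, fromCols_mul_fromRows]
    rw [Matrix.neg_mul]
    rw [← hsid]
    abel
  have hmain := CDcore p (fun l w => Fm n p l * G⁻¹ * (Fm n p w)ᴴ) V hstar α hne
    hKaa hKbb lam om
  exact finalAssembly p α lam om hne _ _ _ _ _ _ _ hKaa hKbb hmain

end
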